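/- Let n > p, X ∈ R^{n×p} and Y ∈ R^{n×(n−p)}. Then ‖X‖_* ≤ ‖[X Y]‖_*, where [X Y] ∈ R^{n×n} is the block matrix with blocks X and Y, and equality holds if and only if Y = 0. -/

import Mathlib

open Matrix

noncomputable def nuclearNorm {m n : Type*} [Fintype m] [Fintype n] [DecidableEq n]
    (A : Matrix m n ℝ) : ℝ :=
  (let hA := (Matrix.posSemidef_conjTranspose_mul_self A).1
   (hA.eigenvectorUnitary.1 * diagonal (Real.sqrt ∘ hA.eigenvalues) *
     (star hA.eigenvectorUnitary : Matrix n n ℝ))).trace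

noncomputable def opNorm {m n : Type*} [Fintype m] [Fintype n] [DecidableEq m] [DecidableEq n]
    (A : Matrix m n ℝ) : ℝ :=
  ‖(LinearMap.toContinuousLinearMap
      (Matrix.toEuclideanLin A : EuclideanSpace ℝ n →ₗ[ℝ] EuclideanSpace ℝ m))‖

def finner {m n : Type*} [Fintype m] [Fintype n] (A B : Matrix m n ℝ) : ℝ :=
  (Aᵀ * B).trace

noncomputable def nuclearSubdiff {m n : Type*} [Fintype m] [Fintype n] [DecidableEq n]
    (X : Matrix m n ℝ) : Set (Matrix m n ℝ) :=
  {Y | ∀ Z, nuclearNorm X + finner Y (Z - X) ≤ nuclearNorm Z}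

def rectDiag (n p : ℕ) (s : Fin p → ℝ) : Matrix (Fin n) (Fin p) ℝ :=
  Matrix.of fun i j => if (i : ℕ) = (j : ℕ) then s j else 0

def blockIR (n p r : ℕ) (R : Matrix (Fin (n - r)) (Fin (p - r)) ℝ) :
    Matrix (Fin n) (Fin p) ℝ :=
  Matrix.of fun i j =>
    if h : (i : ℕ) < r ∨ (j : ℕ) < r then (if (i : ℕ) = (j : ℕ) then 1 else 0)
    else R ⟨i - r, by have := i.isLt; omega⟩ ⟨j - r, by have := j.isLt; omega⟩


namespace Matrix.PosSemidef
variable {k : Type*} [Fintype k] [DecidableEq k]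

noncomputable def sqrt {A : Matrix k k ℝ} (hA : A.PosSemidef) : Matrix k k ℝ :=
  hA.1.eigenvectorUnitary.1 * diagonal (Real.sqrt ∘ hA.1.eigenvalues) *
    (star hA.1.eigenvectorUnitary : Matrix k k ℝ)

lemma posSemidef_sqrt {A : Matrix k k ℝ} (hA : A.PosSemidef) : hA.sqrt.PosSemidef := by
  unfold sqrt
  rw [star_eq_conjTranspose]
  exact (PosSemidef.diagonal (fun i => Real.sqrt_nonneg _)).mul_mul_conjTranspose_same _

lemma sqrt_mul_self {A : Matrix k k ℝ} (hA : A.PosSemidef) : hA.sqrt * hA.sqrt = A := by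
  have hU : (star hA.1.eigenvectorUnitary : Matrix k k ℝ) * hA.1.eigenvectorUnitary.1 = 1 :=
    Unitary.coe_star_mul_self _
  have h0 := hA.1.spectral_theorem
  rw [Unitary.conjStarAlgAut_apply] at h0
  simp only [RCLike.ofReal_real_eq_id, Function.id_comp] at h0
  unfold sqrt
  calc _ = hA.1.eigenvectorUnitary.1 * (diagonal (Real.sqrt ∘ hA.1.eigenvalues) *
        ((star hA.1.eigenvectorUnitary : Matrix k k ℝ) * hA.1.eigenvectorUnitary.1) *
        diagonal (Real.sqrt ∘ hA.1.eigenvalues)) * (star hA.1.eigenvectorUnitary : Matrix k k ℝ) := by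
        simp only [Matrix.mul_assoc]
    _ = hA.1.eigenvectorUnitary.1 * diagonal hA.1.eigenvalues *
        (star hA.1.eigenvectorUnitary : Matrix k k ℝ) := by
        rw [hU, Matrix.mul_one, diagonal_mul_diagonal]
        congr 3
        funext i
        exact Real.mul_self_sqrt (hA.eigenvalues_nonneg i)
    _ = A := h0.symm

end Matrix.PosSemidef

namespace NucAux
variable {m k : Type*} [Fintype m] [Fintype k] [DecidableEq k]

lemma sqrt_congr {A B : Matrix k k ℝ} (h : A = B) (hA : A.PosSemidef) (hB : B.PosSemidef) :
    hA.sqrt = hB.sqrt := by subst h; rfl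

lemma trace_unitary_conj (X : Matrix k k ℝ) {U : Matrix k k ℝ}
    (hU : U ∈ Matrix.unitaryGroup k ℝ) : (U * X * star U).trace = X.trace := by
  rw [trace_mul_cycle, Matrix.mem_unitaryGroup_iff'.mp hU, one_mul]

lemma trace_sqrt {A : Matrix k k ℝ} (hA : A.PosSemidef) :
    hA.sqrt.trace = ∑ i, Real.sqrt (hA.1.eigenvalues i) := by
  rw [Matrix.PosSemidef.sqrt, trace_unitary_conj _ (hA.1.eigenvectorUnitary).2, trace_diagonal]
  simp [RCLike.ofReal_real_eq_id]

end NucAux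

namespace NucAux
variable {m k : Type*} [Fintype m] [Fintype k] [DecidableEq k]

lemma psd_diag_nonneg {A : Matrix k k ℝ} (hA : A.PosSemidef) (i : k) : 0 ≤ A i i := by
  have := hA.dotProduct_mulVec_nonneg (Pi.single i 1)
  simpa [Matrix.mulVec_single, single_dotProduct] using this

lemma psd_trace_nonneg {A : Matrix k k ℝ} (hA : A.PosSemidef) : 0 ≤ A.trace :=
  Finset.sum_nonneg fun i _ => psd_diag_nonneg hA i

lemma psd_trace_eq_zero {A : Matrix k k ℝ} (hA : A.PosSemidef) (h : A.trace = 0) : A = 0 := by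
  have hsym : hA.sqrt.IsHermitian := hA.posSemidef_sqrt.1
  have ht : (hA.sqrt * hA.sqrt).trace = 0 := by rw [hA.sqrt_mul_self]; exact h
  have hsum : ∑ i, ∑ j, hA.sqrt i j * hA.sqrt i j = 0 := by
    rw [← ht]
    simp only [Matrix.trace, Matrix.diag, Matrix.mul_apply]
    refine Finset.sum_congr rfl fun i _ => Finset.sum_congr rfl fun j _ => ?_
    have hji : hA.sqrt j i = hA.sqrt i j := by
      conv_lhs => rw [← hsym.eq]
      simp [Matrix.conjTranspose_apply]
    rw [hji]
  have hz : ∀ i j, hA.sqrt i j = 0 := by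
    intro i j
    have h1 : ∀ i ∈ (Finset.univ : Finset k), ∑ j, hA.sqrt i j * hA.sqrt i j = 0 := by
      intro i _
      have := Finset.sum_eq_zero_iff_of_nonneg (fun i _ => Finset.sum_nonneg
        (fun j _ => mul_self_nonneg (hA.sqrt i j))) |>.mp hsum
      exact this i (Finset.mem_univ i)
    have := Finset.sum_eq_zero_iff_of_nonneg (fun j _ => mul_self_nonneg (hA.sqrt i j)) |>.mp
      (h1 i (Finset.mem_univ i)) j (Finset.mem_univ j)
    exact mul_self_eq_zero.mp this
  have : hA.sqrt = 0 := by ext i j; exact hz i j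
  rw [← hA.sqrt_mul_self, this, Matrix.mul_zero]

end NucAux

namespace NucAux
variable {m k : Type*} [Fintype m] [Fintype k] [DecidableEq k]

lemma sqrt_add_psd {P Q : Matrix k k ℝ} (hP : P.PosSemidef) (hQ : Q.PosSemidef) :
    ((hP.add hQ).sqrt - hP.sqrt).PosSemidef := by
  set S := (hP.add hQ).sqrt with hSdef
  set T := hP.sqrt with hTdef
  have hS : S.PosSemidef := (hP.add hQ).posSemidef_sqrt
  have hT : T.PosSemidef := hP.posSemidef_sqrt
  have hD : (S - T).IsHermitian := hS.1.sub hT.1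
  refine hD.posSemidef_iff_eigenvalues_nonneg.mpr fun i => show (0:ℝ) ≤ hD.eigenvalues i from ?_
  by_contra hneg
  push_neg at hneg
  set μ : ℝ := - hD.eigenvalues i with hμ
  have hμpos : 0 < μ := by simp only [hμ]; linarith
  set v : k → ℝ := ⇑(hD.eigenvectorBasis i) with hv
  have hvnorm : ‖hD.eigenvectorBasis i‖ = 1 := hD.eigenvectorBasis.orthonormal.1 i
  have hvne : v ≠ 0 := by
    intro h0
    have : hD.eigenvectorBasis i = 0 := by
      apply (hD.eigenvectorBasis i).ext  -- may fail
      intro j; exact congrFun h0 j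
    rw [this, norm_zero] at hvnorm; norm_num at hvnorm
  have heig : (S - T) *ᵥ v = (- μ) • v := by
    have := hD.mulVec_eigenvectorBasis i
    simpa [hμ, hv] using this
  have hTSv : (T - S) *ᵥ v = μ • v := by
    have : (T - S) *ᵥ v = - ((S - T) *ᵥ v) := by
      rw [← Matrix.neg_mulVec, neg_sub]
    rw [this, heig]; ext j; simp
  have hsymm : (T - S)ᵀ = T - S := by
    have := (hT.1.sub hS.1).eq
    rwa [Matrix.conjTranspose_eq_transpose_of_trivial] at this
  -- symmetric mulVec swap
  have hswap : ∀ w : k → ℝ, v ⬝ᵥ ((T - S) *ᵥ w) = ((T - S) *ᵥ v) ⬝ᵥ w := by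
    intro w
    rw [Matrix.dotProduct_mulVec, ← Matrix.mulVec_transpose, hsymm]
  have key : v ⬝ᵥ ((T * T) *ᵥ v) - v ⬝ᵥ ((S * S) *ᵥ v)
      = μ * (v ⬝ᵥ (T *ᵥ v)) + μ * (v ⬝ᵥ (S *ᵥ v)) := by
    have hexp : T * T - S * S = T * (T - S) + (T - S) * S := by noncomm_ring
    have h1 : v ⬝ᵥ ((T * (T - S)) *ᵥ v) = μ * (v ⬝ᵥ (T *ᵥ v)) := by
      rw [← Matrix.mulVec_mulVec, hTSv, Matrix.mulVec_smul, dotProduct_smul]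
      rfl
    have h2 : v ⬝ᵥ (((T - S) * S) *ᵥ v) = μ * (v ⬝ᵥ (S *ᵥ v)) := by
      rw [← Matrix.mulVec_mulVec, hswap, hTSv, smul_dotProduct]
      rfl
    calc v ⬝ᵥ ((T * T) *ᵥ v) - v ⬝ᵥ ((S * S) *ᵥ v)
        = v ⬝ᵥ ((T * T - S * S) *ᵥ v) := by
          rw [Matrix.sub_mulVec, dotProduct_sub]
      _ = v ⬝ᵥ ((T * (T - S)) *ᵥ v) + v ⬝ᵥ (((T - S) * S) *ᵥ v) := by
          rw [hexp, Matrix.add_mulVec, dotProduct_add]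
      _ = μ * (v ⬝ᵥ (T *ᵥ v)) + μ * (v ⬝ᵥ (S *ᵥ v)) := by rw [h1, h2]
  have hTT : T * T = P := hP.sqrt_mul_self
  have hSS : S * S = P + Q := (hP.add hQ).sqrt_mul_self
  have hQv : 0 ≤ v ⬝ᵥ (Q *ᵥ v) := by simpa using hQ.dotProduct_mulVec_nonneg v
  have hTv : 0 ≤ v ⬝ᵥ (T *ᵥ v) := by simpa using hT.dotProduct_mulVec_nonneg v
  have hSv : 0 ≤ v ⬝ᵥ (S *ᵥ v) := by simpa using hS.dotProduct_mulVec_nonneg v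
  have hkey2 : v ⬝ᵥ ((T * T) *ᵥ v) - v ⬝ᵥ ((S * S) *ᵥ v) = - (v ⬝ᵥ (Q *ᵥ v)) := by
    rw [hTT, hSS, Matrix.add_mulVec, dotProduct_add]; ring
  have hzero : v ⬝ᵥ (T *ᵥ v) = 0 ∧ v ⬝ᵥ (S *ᵥ v) = 0 := by
    constructor <;> nlinarith [key, hkey2]
  have hTv0 : T *ᵥ v = 0 := by
    have := hT.dotProduct_mulVec_zero_iff v
    simp only [star_trivial] at this
    exact this.mp hzero.1
  have hSv0 : S *ᵥ v = 0 := by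
    have := hS.dotProduct_mulVec_zero_iff v
    simp only [star_trivial] at this
    exact this.mp hzero.2
  have : μ • v = 0 := by rw [← hTSv, Matrix.sub_mulVec, hTv0, hSv0, sub_zero]
  exact hvne (by simpa [smul_eq_zero, hμpos.ne'] using this)

end NucAux

namespace NucAux
variable {m k : Type*} [Fintype m] [Fintype k] [DecidableEq k]

lemma trace_sqrt_le {P Q : Matrix k k ℝ} (hP : P.PosSemidef) (hQ : Q.PosSemidef) :
    hP.sqrt.trace ≤ (hP.add hQ).sqrt.trace := by
  have := psd_trace_nonneg (sqrt_add_psd hP hQ)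
  rw [Matrix.trace_sub] at this; linarith

lemma eq_zero_of_trace_sqrt_eq {P Q : Matrix k k ℝ} (hP : P.PosSemidef) (hQ : Q.PosSemidef)
    (h : (hP.add hQ).sqrt.trace = hP.sqrt.trace) : Q = 0 := by
  have h0 := psd_trace_eq_zero (sqrt_add_psd hP hQ)
    (by rw [Matrix.trace_sub, h, sub_self])
  have h1 : (hP.add hQ).sqrt = hP.sqrt := by rwa [sub_eq_zero] at h0
  have h2 : P + Q = P := by
    conv_lhs => rw [← (hP.add hQ).sqrt_mul_self, h1, hP.sqrt_mul_self]
  have := add_eq_left.mp h2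
  exact this

/-- contraction property -/
def Contr (Q : Matrix m k ℝ) : Prop := ∀ v : k → ℝ, (Q *ᵥ v) ⬝ᵥ (Q *ᵥ v) ≤ v ⬝ᵥ v

lemma dotProduct_self_nonneg' (v : k → ℝ) : 0 ≤ v ⬝ᵥ v :=
  Finset.sum_nonneg fun i _ => mul_self_nonneg (v i)

lemma dot_mulVec_left (Q : Matrix m k ℝ) (u : k → ℝ) (w : m → ℝ) :
    u ⬝ᵥ (Qᵀ *ᵥ w) = (Q *ᵥ u) ⬝ᵥ w := by
  rw [Matrix.dotProduct_mulVec, Matrix.vecMul_transpose]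

lemma cauchy_schwarz_dot (a b : m → ℝ) : (a ⬝ᵥ b) ^ 2 ≤ (a ⬝ᵥ a) * (b ⬝ᵥ b) := by
  have := Finset.sum_mul_sq_le_sq_mul_sq Finset.univ a b
  simpa [dotProduct, pow_two] using this

lemma conj_entry (X U : Matrix k k ℝ) (i : k) :
    (Uᵀ * X * U) i i = (fun a => U a i) ⬝ᵥ (X *ᵥ fun a => U a i) := by
  simp only [Matrix.mul_apply, Matrix.transpose_apply, dotProduct, Matrix.mulVec,
    Finset.sum_mul, Finset.mul_sum]
  rw [Finset.sum_comm]
  exact Finset.sum_congr rfl fun j _ => Finset.sum_congr rfl fun l _ => by ring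

end NucAux

namespace NucAux
set_option linter.unusedSectionVars false
variable {m k : Type*} [Fintype m] [Fintype k] [DecidableEq k]

lemma trace_conj_unitary' (X : Matrix k k ℝ) {U : Matrix k k ℝ}
    (hU : U ∈ Matrix.unitaryGroup k ℝ) : (star U * X * U).trace = X.trace := by
  rw [Matrix.trace_mul_cycle, Matrix.mem_unitaryGroup_iff.mp hU, one_mul]

lemma nuclearNorm_eq_sum (M : Matrix m k ℝ) :
    nuclearNorm M = ∑ i, Real.sqrt ((Matrix.posSemidef_conjTranspose_mul_self M).1.eigenvalues i) :=
  trace_sqrt (Matrix.posSemidef_conjTranspose_mul_self M)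

lemma trace_le_nuclearNorm (M Q : Matrix m k ℝ) (hQ : Contr Q) :
    (Qᵀ * M).trace ≤ nuclearNorm M := by
  classical
  set h : (Mᴴ * M).PosSemidef := Matrix.posSemidef_conjTranspose_mul_self M with hdef
  set U : Matrix k k ℝ := (h.1.eigenvectorUnitary : Matrix k k ℝ) with hU
  have hUmem : U ∈ Matrix.unitaryGroup k ℝ := h.1.eigenvectorUnitary.2
  have hMT : Mᴴ = Mᵀ := Matrix.conjTranspose_eq_transpose_of_trivial M
  have hstar : star U = Uᵀ := by
    rw [Matrix.star_eq_conjTranspose, Matrix.conjTranspose_eq_transpose_of_trivial]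
  have htr : (Qᵀ * M).trace = ∑ i, (Uᵀ * (Qᵀ * M) * U) i i := by
    rw [← hstar,
      show ∑ i, (star U * (Qᵀ * M) * U) i i = (star U * (Qᵀ * M) * U).trace from rfl,
      trace_conj_unitary' _ hUmem]
  rw [htr, nuclearNorm_eq_sum]
  apply Finset.sum_le_sum
  intro i _
  set u : k → ℝ := fun a => U a i with hu
  have hub : u = ⇑(h.1.eigenvectorBasis i) := by
    funext a; rw [hu, hU]; exact h.1.eigenvectorUnitary_apply a i
  have hentry : (Uᵀ * (Qᵀ * M) * U) i i = (Q *ᵥ u) ⬝ᵥ (M *ᵥ u) := by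
    rw [conj_entry, ← Matrix.mulVec_mulVec, dot_mulVec_left]
  have hn : ‖h.1.eigenvectorBasis i‖ = 1 := h.1.eigenvectorBasis.orthonormal.1 i
  have huu : u ⬝ᵥ u = 1 := by
    have h2 : u ⬝ᵥ u = ‖h.1.eigenvectorBasis i‖ ^ 2 := by
      rw [← real_inner_self_eq_norm_sq, hub]
      rw [EuclideanSpace.inner_eq_star_dotProduct, star_trivial]
    rw [h2, hn, one_pow]
  have hMu : (M *ᵥ u) ⬝ᵥ (M *ᵥ u) = h.1.eigenvalues i := by
    have h1 : (M *ᵥ u) ⬝ᵥ (M *ᵥ u) = u ⬝ᵥ ((Mᵀ * M) *ᵥ u) := by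
      rw [← Matrix.mulVec_mulVec, dot_mulVec_left]
    have h2 : (Mᴴ * M) *ᵥ u = h.1.eigenvalues i • u := by
      rw [hub]; exact h.1.mulVec_eigenvectorBasis i
    rw [h1, ← hMT, h2, dotProduct_smul, huu, smul_eq_mul, mul_one]
  have hcs := cauchy_schwarz_dot (Q *ᵥ u) (M *ᵥ u)
  have hQu : (Q *ᵥ u) ⬝ᵥ (Q *ᵥ u) ≤ 1 := by
    have := hQ u; rwa [huu] at this
  have hev : (0:ℝ) ≤ h.1.eigenvalues i := h.eigenvalues_nonneg i
  have hsq : ((Q *ᵥ u) ⬝ᵥ (M *ᵥ u))^2 ≤ h.1.eigenvalues i := by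
    nlinarith [dotProduct_self_nonneg' (M *ᵥ u), dotProduct_self_nonneg' (Q *ᵥ u)]
  rw [hentry]
  calc (Q *ᵥ u) ⬝ᵥ (M *ᵥ u) ≤ |(Q *ᵥ u) ⬝ᵥ (M *ᵥ u)| := le_abs_self _
    _ = Real.sqrt (((Q *ᵥ u) ⬝ᵥ (M *ᵥ u))^2) := (Real.sqrt_sq_eq_abs _).symm
    _ ≤ Real.sqrt (h.1.eigenvalues i) := Real.sqrt_le_sqrt hsq

end NucAux

namespace NucAux
set_option linter.unusedSectionVars false
variable {m k : Type*} [Fintype m] [Fintype k] [DecidableEq k]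

lemma gram_dot (A : Matrix m k ℝ) (v : k → ℝ) :
    v ⬝ᵥ ((Aᵀ * A) *ᵥ v) = (A *ᵥ v) ⬝ᵥ (A *ᵥ v) := by
  rw [← Matrix.mulVec_mulVec, dot_mulVec_left]

lemma uconj_dot (U D : Matrix k k ℝ) (v : k → ℝ) :
    v ⬝ᵥ ((U * D * Uᵀ) *ᵥ v) = (Uᵀ *ᵥ v) ⬝ᵥ (D *ᵥ (Uᵀ *ᵥ v)) := by
  have h := dot_mulVec_left Uᵀ v (D *ᵥ (Uᵀ *ᵥ v))
  rw [Matrix.transpose_transpose] at h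
  rw [← Matrix.mulVec_mulVec, ← Matrix.mulVec_mulVec]
  exact h

lemma exists_attain (M : Matrix m k ℝ) :
    ∃ W : Matrix m k ℝ, Contr W ∧ (Wᵀ * M).trace = nuclearNorm M := by
  classical
  set h : (Mᴴ * M).PosSemidef := Matrix.posSemidef_conjTranspose_mul_self M with hdef
  set U : Matrix k k ℝ := (h.1.eigenvectorUnitary : Matrix k k ℝ) with hU
  have hUmem : U ∈ Matrix.unitaryGroup k ℝ := h.1.eigenvectorUnitary.2
  have hMT : Mᴴ = Mᵀ := Matrix.conjTranspose_eq_transpose_of_trivial M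
  have hstar : star U = Uᵀ := by
    rw [Matrix.star_eq_conjTranspose, Matrix.conjTranspose_eq_transpose_of_trivial]
  have hUUt : U * Uᵀ = 1 := by rw [← hstar]; exact Matrix.mem_unitaryGroup_iff.mp hUmem
  have hUtU : Uᵀ * U = 1 := by rw [← hstar]; exact Matrix.mem_unitaryGroup_iff'.mp hUmem
  set lam : k → ℝ := h.1.eigenvalues with hlam
  have hev : ∀ i, 0 ≤ lam i := fun i => h.eigenvalues_nonneg i
  have hspec : Mᵀ * M = U * Matrix.diagonal lam * Uᵀ := by
    have h0 := h.1.spectral_theorem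
    simp only [Unitary.conjStarAlgAut_apply, RCLike.ofReal_real_eq_id, Function.id_comp, Matrix.star_eq_conjTranspose,
      Matrix.conjTranspose_eq_transpose_of_trivial] at h0
    rw [← hMT]; exact h0
  have hcancel : ∀ X : Matrix k k ℝ, Uᵀ * (U * X) = X := fun X => by
    rw [← Matrix.mul_assoc, hUtU, Matrix.one_mul]
  have hspec' : ∀ X : Matrix k k ℝ, Mᵀ * (M * X) = U * (Matrix.diagonal lam * (Uᵀ * X)) := by
    intro X
    rw [← Matrix.mul_assoc, hspec]
    simp only [Matrix.mul_assoc]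
  set g : k → ℝ := fun i => if lam i = 0 then 0 else (Real.sqrt (lam i))⁻¹ with hg
  set R : Matrix k k ℝ := U * Matrix.diagonal g * Uᵀ with hR
  have hRt : Rᵀ = R := by
    rw [hR, Matrix.transpose_mul, Matrix.transpose_mul, Matrix.transpose_transpose,
      Matrix.diagonal_transpose, Matrix.mul_assoc]
  set e : k → ℝ := fun i => if lam i = 0 then 0 else 1 with he
  have hdiage : Matrix.diagonal g * (Matrix.diagonal lam * (Matrix.diagonal g * Uᵀ))
      = Matrix.diagonal e * Uᵀ := by
    rw [← Matrix.mul_assoc, ← Matrix.mul_assoc, Matrix.diagonal_mul_diagonal,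
      Matrix.diagonal_mul_diagonal]
    rw [show ((fun i => (fun i => g i * lam i) i * g i) : k → ℝ) = e from funext fun i => ?_]
    by_cases hi : lam i = 0
    · simp [hg, he, hi]
    · have hs : (0:ℝ) < Real.sqrt (lam i) :=
        Real.sqrt_pos.mpr (lt_of_le_of_ne (hev i) (Ne.symm hi))
      have hss : Real.sqrt (lam i) * Real.sqrt (lam i) = lam i := Real.mul_self_sqrt (hev i)
      simp only [hg, he, if_neg hi]
      calc (Real.sqrt (lam i))⁻¹ * lam i * (Real.sqrt (lam i))⁻¹
          = (Real.sqrt (lam i))⁻¹ * (Real.sqrt (lam i) * Real.sqrt (lam i))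
            * (Real.sqrt (lam i))⁻¹ := by rw [hss]
        _ = 1 := by field_simp
  have hgram : (M * R)ᵀ * (M * R) = U * (Matrix.diagonal e * Uᵀ) := by
    rw [Matrix.transpose_mul, hRt, hR]
    simp only [Matrix.mul_assoc]
    rw [hspec']
    simp only [hcancel]
    rw [hdiage]
  have hdiagl : Matrix.diagonal g * (Matrix.diagonal lam * Uᵀ)
      = Matrix.diagonal (fun i => g i * lam i) * Uᵀ := by
    rw [← Matrix.mul_assoc, Matrix.diagonal_mul_diagonal]
  refine ⟨M * R, ?_, ?_⟩
  · intro v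
    have h1 : ((M * R) *ᵥ v) ⬝ᵥ ((M * R) *ᵥ v)
        = v ⬝ᵥ ((U * Matrix.diagonal e * Uᵀ) *ᵥ v) := by
      rw [← gram_dot, hgram, Matrix.mul_assoc]
    have h2 : v ⬝ᵥ v = v ⬝ᵥ ((U * Matrix.diagonal (fun _ => (1:ℝ)) * Uᵀ) *ᵥ v) := by
      rw [show Matrix.diagonal (fun _ => (1:ℝ)) = (1 : Matrix k k ℝ) from Matrix.diagonal_one,
        Matrix.mul_one, hUUt, Matrix.one_mulVec]
    rw [h1, h2, uconj_dot, uconj_dot]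
    set w := Uᵀ *ᵥ v with hw
    have hd : ∀ (d : k → ℝ), w ⬝ᵥ (Matrix.diagonal d *ᵥ w) = ∑ i, d i * (w i * w i) := by
      intro d
      simp only [dotProduct, Matrix.mulVec_diagonal]
      exact Finset.sum_congr rfl fun i _ => by ring
    rw [hd, hd]
    apply Finset.sum_le_sum
    intro i _
    by_cases hi : lam i = 0
    · simp only [he, if_pos hi, zero_mul, one_mul]
      nlinarith [mul_self_nonneg (w i)]
    · simp only [he, if_neg hi, one_mul]
      exact le_rfl
  · have htr2 : (M * R)ᵀ * M = U * (Matrix.diagonal (fun i => g i * lam i) * Uᵀ) := by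
      rw [Matrix.transpose_mul, hRt, hR]
      simp only [Matrix.mul_assoc]
      rw [hspec]
      simp only [Matrix.mul_assoc, hcancel]
      rw [hdiagl]
    have : (U * (Matrix.diagonal (fun i => g i * lam i) * Uᵀ)).trace
        = (Matrix.diagonal (fun i => g i * lam i)).trace := by
      rw [← Matrix.mul_assoc, ← hstar]
      exact trace_unitary_conj _ hUmem
    rw [htr2, this, Matrix.trace_diagonal, nuclearNorm_eq_sum]
    apply Finset.sum_congr rfl
    intro i _
    by_cases hi : lam i = 0
    · rw [show (Matrix.posSemidef_conjTranspose_mul_self M).1.eigenvalues i = lam i from rfl, hi]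
      simp [hg, hi]
    · rw [show (Matrix.posSemidef_conjTranspose_mul_self M).1.eigenvalues i = lam i from rfl]
      have hss : Real.sqrt (lam i) * Real.sqrt (lam i) = lam i := Real.mul_self_sqrt (hev i)
      have hs : (0:ℝ) < Real.sqrt (lam i) :=
        Real.sqrt_pos.mpr (lt_of_le_of_ne (hev i) (Ne.symm hi))
      simp only [hg, if_neg hi]
      calc (Real.sqrt (lam i))⁻¹ * lam i
          = (Real.sqrt (lam i))⁻¹ * (Real.sqrt (lam i) * Real.sqrt (lam i)) := by rw [hss]
        _ = Real.sqrt (lam i) := by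
            rw [← mul_assoc, inv_mul_cancel₀ hs.ne', one_mul]

end NucAux

namespace NucAux
set_option linter.unusedSectionVars false
variable {m k : Type*} [Fintype m] [Fintype k] [DecidableEq k]

lemma contr_transpose [DecidableEq m] {Q : Matrix m k ℝ} (hQ : Contr Q) : Contr Qᵀ := by
  intro v
  set w := Qᵀ *ᵥ v with hw
  have h1 : w ⬝ᵥ w = v ⬝ᵥ (Q *ᵥ w) := by
    have h := dot_mulVec_left Qᵀ v w
    rw [Matrix.transpose_transpose] at h
    rw [hw]
    exact h.symm
  rcases (dotProduct_self_nonneg' w).eq_or_lt' with h0 | h0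
  · rw [h0]; exact dotProduct_self_nonneg' v
  · have hcs := cauchy_schwarz_dot v (Q *ᵥ w)
    have hqw := hQ w
    have hvv := dotProduct_self_nonneg' v
    nlinarith [h1, hcs, hqw, h0]

lemma nuclearNorm_transpose_le [DecidableEq m] (M : Matrix m k ℝ) :
    nuclearNorm Mᵀ ≤ nuclearNorm M := by
  obtain ⟨W, hW, hWt⟩ := exists_attain Mᵀ
  rw [← hWt]
  have h1 : (Wᵀ * Mᵀ).trace = ((Wᵀ)ᵀ * M).trace := by
    rw [Matrix.transpose_transpose, ← Matrix.transpose_mul, Matrix.trace_transpose,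
      Matrix.trace_mul_comm]
  rw [h1]
  exact trace_le_nuclearNorm M Wᵀ (contr_transpose hW)

lemma nuclearNorm_transpose [DecidableEq m] (M : Matrix m k ℝ) :
    nuclearNorm Mᵀ = nuclearNorm M :=
  le_antisymm (nuclearNorm_transpose_le M)
    (by simpa [Matrix.transpose_transpose] using nuclearNorm_transpose_le Mᵀ)

lemma nuclearNorm_eq_trace_sqrt_mul_conj [DecidableEq m] (M : Matrix m k ℝ) :
    nuclearNorm M = (Matrix.posSemidef_self_mul_conjTranspose M).sqrt.trace := by
  rw [← nuclearNorm_transpose M]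
  unfold nuclearNorm
  have h : (Mᵀ)ᴴ * Mᵀ = M * Mᴴ := by
    simp [Matrix.conjTranspose_eq_transpose_of_trivial]
  exact congrArg Matrix.trace (sqrt_congr h (Matrix.posSemidef_conjTranspose_mul_self Mᵀ) _)

end NucAux

theorem nuclearNorm_le_nuclearNorm_fromColumns {n p : ℕ} (hpn : p < n)
    (X : Matrix (Fin n) (Fin p) ℝ) (Y : Matrix (Fin n) (Fin (n - p)) ℝ) :
    nuclearNorm X ≤ nuclearNorm (Matrix.fromCols X Y) ∧
    (nuclearNorm X = nuclearNorm (Matrix.fromCols X Y) ↔ Y = 0) := by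

  have hXX : Matrix.PosSemidef (X * Xᴴ) := Matrix.posSemidef_self_mul_conjTranspose X
  have hYY : Matrix.PosSemidef (Y * Yᴴ) := Matrix.posSemidef_self_mul_conjTranspose Y
  have hB : (Matrix.fromCols X Y) * (Matrix.fromCols X Y)ᴴ = X * Xᴴ + Y * Yᴴ := by
    rw [Matrix.conjTranspose_fromCols_eq_fromRows_conjTranspose,
      Matrix.fromCols_mul_fromRows]
  have e1 : nuclearNorm X = hXX.sqrt.trace := NucAux.nuclearNorm_eq_trace_sqrt_mul_conj X
  have e2 : nuclearNorm (Matrix.fromCols X Y) = (hXX.add hYY).sqrt.trace := by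
    rw [NucAux.nuclearNorm_eq_trace_sqrt_mul_conj]
    exact congrArg Matrix.trace (NucAux.sqrt_congr hB _ _)
  refine ⟨?_, ?_, ?_⟩
  · rw [e1, e2]; exact NucAux.trace_sqrt_le hXX hYY
  · intro he
    have ht : (hXX.add hYY).sqrt.trace = hXX.sqrt.trace := by rw [← e1, ← e2, he]
    exact Matrix.self_mul_conjTranspose_eq_zero.mp (NucAux.eq_zero_of_trace_sqrt_eq hXX hYY ht)
  · rintro rfl
    rw [e1, e2]
    exact congrArg Matrix.trace (NucAux.sqrt_congr (by simp) _ _)
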